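/- arXiv:1803.02535 — 2 statements merged into one kernel-verified Lean document; each statement's English description precedes it below -/
import Mathlib

section
/- With notation as in the setup, for every S ⊆ {1,…,n} one has A^0_{Φ_S} + ρ·A^0_{Φ_S} = (1/2)·Σ_{γ∈Γ} γ in ℂ[Γ]. Equivalently, viewing A^0_{Φ_S} as a function on Γ, A^0_{Φ_S}(γ) + A^0_{Φ_S}(ργ) = 1/2 for every γ ∈ Γ; that is, A^0_{Φ_S} lies in the space 𝒞ℳ⁰ of class functions f for which f(γ) + f(ργ) is independent of γ. -/
open MonoidAlgebra Finset

noncomputable section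

/-- `Γ = G × ℤ/2ℤ` (written multiplicatively). -/
abbrev Gam (G : Type*) := G × Multiplicative (ZMod 2)

/-- The element `ρ = (1,1) ∈ Γ` ("complex conjugation"). -/
def rhoEl (G : Type*) [Group G] : Gam G := (1, Multiplicative.ofAdd (1 : ZMod 2))

/-- Embedding of `g ∈ G` into `ℂ[Γ]` via `g ↦ (g,0)`. -/
def emb {G : Type*} [Group G] (g : G) : MonoidAlgebra ℂ (Gam G) :=
  MonoidAlgebra.of ℂ (Gam G) (g, 1)

/-- `ρ` as an element of `ℂ[Γ]`. -/
def rho (G : Type*) [Group G] : MonoidAlgebra ℂ (Gam G) :=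
  MonoidAlgebra.of ℂ (Gam G) (rhoEl G)

/-- `T = Σ_{g ∈ G} g ∈ ℂ[Γ]`. -/
def Tsum (G : Type*) [Group G] [Fintype G] : MonoidAlgebra ℂ (Gam G) :=
  ∑ g : G, emb g

/-- `Σ_{x ∈ H} a·x·b ∈ ℂ[Γ]`. -/
def cosetSum {G : Type*} [Group G] [Fintype G] (H : Subgroup G) [DecidablePred (· ∈ H)]
    (a b : G) : MonoidAlgebra ℂ (Gam G) :=
  ∑ x : H, emb (a * (x : G) * b)

/-- `Φ_S = T + (ρ-1)·Σ_{i∈S} Σ_{x∈H} σ_i x ∈ ℂ[Γ]`, the CM type attached to `S`. -/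
def Phi {G : Type*} [Group G] [Fintype G] (H : Subgroup G) [DecidablePred (· ∈ H)] {n : ℕ}
    (σ : Fin n → G) (S : Finset (Fin n)) : MonoidAlgebra ℂ (Gam G) :=
  Tsum G + (rho G - 1) * ∑ i ∈ S, cosetSum H (σ i) 1

/-- The ℂ-linear map `ι : ℂ[Γ] → ℂ[Γ]` sending each `γ ∈ Γ` to `γ⁻¹`. -/
def iota (Γ : Type*) [Group Γ] : MonoidAlgebra ℂ Γ →ₗ[ℂ] MonoidAlgebra ℂ Γ :=
  MonoidAlgebra.mapDomainLinearMap ℂ ℂ fun γ : Γ => γ⁻¹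

/-- `A_{Φ_S} = (1/(2hn))·Φ_S·ι(Φ_S)`. -/
def Afun {G : Type*} [Group G] [Fintype G] (H : Subgroup G) [DecidablePred (· ∈ H)] {n : ℕ}
    (σ : Fin n → G) (S : Finset (Fin n)) : MonoidAlgebra ℂ (Gam G) :=
  ((2 * (Nat.card H) * n : ℂ))⁻¹ • (Phi H σ S * iota (Gam G) (Phi H σ S))

/-- `A⁰_{Φ_S} = (1/|Γ|)·Σ_{γ∈Γ} γ·A_{Φ_S}·γ⁻¹`. -/
def A0 {G : Type*} [Group G] [Fintype G] (H : Subgroup G) [DecidablePred (· ∈ H)] {n : ℕ}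
    (σ : Fin n → G) (S : Finset (Fin n)) : MonoidAlgebra ℂ (Gam G) :=
  ((Fintype.card (Gam G) : ℂ))⁻¹ •
    ∑ γ : Gam G, MonoidAlgebra.of ℂ (Gam G) γ * Afun H σ S * MonoidAlgebra.of ℂ (Gam G) γ⁻¹

section helpers
set_option linter.unusedSectionVars false
variable {G : Type*} [Group G] [Fintype G]

lemma rhoEl_sq : rhoEl G * rhoEl G = 1 := by
  have h : Multiplicative.ofAdd (1:ZMod 2) * Multiplicative.ofAdd (1:ZMod 2) = 1 := by decide
  simp [rhoEl, Prod.ext_iff, h]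

lemma rhoEl_inv : (rhoEl G)⁻¹ = rhoEl G := by
  have h : (Multiplicative.ofAdd (1:ZMod 2))⁻¹ = Multiplicative.ofAdd (1:ZMod 2) := by decide
  simp [rhoEl, Prod.ext_iff, h]

lemma rhoEl_comm (γ : Gam G) : rhoEl G * γ = γ * rhoEl G := by
  refine Prod.ext ?_ ?_
  · simp [rhoEl]
  · exact mul_comm _ _

lemma rho_def : rho G = MonoidAlgebra.single (rhoEl G) 1 := rfl
lemma emb_def (g : G) : emb g = MonoidAlgebra.single ((g,1) : Gam G) 1 := rfl

lemma rho_sq : rho G * rho G = 1 := by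
  rw [rho_def, MonoidAlgebra.single_mul_single, rhoEl_sq, mul_one, MonoidAlgebra.one_def]

lemma rho_comm (a : MonoidAlgebra ℂ (Gam G)) : rho G * a = a * rho G := by
  induction a using MonoidAlgebra.induction_linear with
  | zero => simp
  | add f g hf hg => rw [mul_add, add_mul, hf, hg]
  | single γ c =>
    rw [rho_def, MonoidAlgebra.single_mul_single, MonoidAlgebra.single_mul_single,
      one_mul, mul_one, rhoEl_comm]

lemma sub_comm_any (a : MonoidAlgebra ℂ (Gam G)) : a * (rho G - 1) = (rho G - 1) * a := by
  rw [mul_sub, sub_mul, mul_one, one_mul, rho_comm]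

lemma one_add_rho_mul_rho_sub_one : ((1 : MonoidAlgebra ℂ (Gam G)) + rho G) * (rho G - 1) = 0 := by
  rw [add_mul, one_mul, mul_sub, mul_one, rho_sq]
  abel

lemma emb_mul_T (g : G) : emb g * Tsum G = Tsum G := by
  rw [Tsum, Finset.mul_sum]
  refine Fintype.sum_equiv (Equiv.mulLeft g) _ _ fun x => ?_
  rw [emb_def, emb_def, MonoidAlgebra.single_mul_single, mul_one]
  rfl

lemma T_mul_T : Tsum G * Tsum G = (Fintype.card G : ℂ) • Tsum G := by
  nth_rewrite 1 [Tsum]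
  rw [Finset.sum_mul]
  simp only [emb_mul_T, Finset.sum_const, Finset.card_univ]
  rw [← Nat.cast_smul_eq_nsmul ℂ]

lemma iota_single (Γ : Type*) [Group Γ] (γ : Γ) (c : ℂ) :
    iota Γ (MonoidAlgebra.single γ c) = MonoidAlgebra.single γ⁻¹ c :=
  MonoidAlgebra.mapDomainLinearMap_single _ _ _

lemma iota_T : iota (Gam G) (Tsum G) = Tsum G := by
  rw [Tsum, map_sum]
  refine Fintype.sum_equiv (Equiv.inv G) _ _ fun x => ?_
  rw [emb_def, iota_single, emb_def]
  congr 1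
  exact Prod.ext rfl inv_one

lemma iota_mul {Γ : Type*} [Group Γ] (a b : MonoidAlgebra ℂ Γ) :
    iota Γ (a * b) = iota Γ b * iota Γ a := by
  induction a using MonoidAlgebra.induction_linear with
  | zero => simp
  | add f g hf hg => rw [add_mul, map_add, hf, hg, map_add, mul_add]
  | single γ c =>
    induction b using MonoidAlgebra.induction_linear with
    | zero => simp
    | add f g hf hg => rw [mul_add, map_add, hf, hg, map_add, add_mul]
    | single γ' c' =>
      rw [MonoidAlgebra.single_mul_single, iota_single, iota_single, iota_single,
        MonoidAlgebra.single_mul_single, mul_inv_rev, mul_comm c c']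

lemma iota_rho_sub_one : iota (Gam G) (rho G - 1) = rho G - 1 := by
  rw [map_sub, rho_def, iota_single, rhoEl_inv, ← rho_def, MonoidAlgebra.one_def,
    iota_single, inv_one, ← MonoidAlgebra.one_def]

lemma one_add_rho_comm (a : MonoidAlgebra ℂ (Gam G)) :
    (1 + rho G) * a = a * (1 + rho G) := by
  rw [add_mul, mul_add, one_mul, mul_one, rho_comm]

/-- `(1+ρ)·T = Σ_{γ∈Γ} γ`. -/
lemma one_add_rho_mul_T :
    (1 + rho G) * Tsum G = ∑ γ : Gam G, MonoidAlgebra.of ℂ (Gam G) γ := by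
  have huniv : (Finset.univ : Finset (Multiplicative (ZMod 2)))
      = {(1 : Multiplicative (ZMod 2)), Multiplicative.ofAdd 1} := by decide
  have hne : (1 : Multiplicative (ZMod 2)) ≠ Multiplicative.ofAdd 1 := by decide
  rw [add_mul, one_mul, Tsum, Finset.mul_sum, ← Finset.sum_add_distrib,
    Fintype.sum_prod_type]
  refine Finset.sum_congr rfl fun g _ => ?_
  rw [huniv, Finset.sum_pair hne, emb_def, rho_def, MonoidAlgebra.single_mul_single, mul_one]
  have hmul : rhoEl G * ((g, 1) : Gam G) = (g, Multiplicative.ofAdd 1) := by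
    refine Prod.ext ?_ ?_
    · exact one_mul g
    · exact mul_one _
  rw [hmul]
  rfl

/-- Conjugation fixes `Σ_{γ∈Γ} γ`. -/
lemma conj_W (γ : Gam G) :
    MonoidAlgebra.of ℂ (Gam G) γ * (∑ γ' : Gam G, MonoidAlgebra.of ℂ (Gam G) γ')
      * MonoidAlgebra.of ℂ (Gam G) γ⁻¹ = ∑ γ' : Gam G, MonoidAlgebra.of ℂ (Gam G) γ' := by
  rw [Finset.mul_sum, Finset.sum_mul]
  refine Fintype.sum_equiv (MulAut.conj γ).toEquiv _ _ fun x => ?_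
  simp only [MonoidAlgebra.of_apply, MonoidAlgebra.single_mul_single, one_mul, mul_one]
  rfl
end helpers


/-- `A⁰_{Φ_S} + ρ·A⁰_{Φ_S} = (1/2)·Σ_{γ∈Γ} γ`; equivalently, as a function on `Γ`,
`A⁰_{Φ_S}(γ) + A⁰_{Φ_S}(ργ) = 1/2` for every `γ`, i.e. `A⁰_{Φ_S}` lies in `𝒞ℳ⁰`. -/
theorem A0_mem_CM0 {G : Type*} [Group G] [Fintype G] (H : Subgroup G) [DecidablePred (· ∈ H)]
    {n : ℕ} (σ : Fin n → G)
    (hσ : Function.Bijective fun i : Fin n => (QuotientGroup.mk (σ i) : G ⧸ H))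
    (S : Finset (Fin n)) :
    A0 H σ S + rho G * A0 H σ S
        = (2 : ℂ)⁻¹ • ∑ γ : Gam G, MonoidAlgebra.of ℂ (Gam G) γ
      ∧ ∀ γ : Gam G, (A0 H σ S).coeff γ + (A0 H σ S).coeff (rhoEl G * γ) = 1 / 2 := by
  classical
  set W : MonoidAlgebra ℂ (Gam G) := ∑ γ : Gam G, MonoidAlgebra.of ℂ (Gam G) γ with hW
  -- card facts
  have hquot : Nat.card (G ⧸ H) = n := by
    rw [← Nat.card_eq_of_bijective _ hσ, Nat.card_eq_fintype_card, Fintype.card_fin]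
  have hcardG : (Fintype.card G : ℂ) = (Nat.card H : ℂ) * n := by
    rw [← Nat.card_eq_fintype_card, Subgroup.card_eq_card_quotient_mul_card_subgroup H, hquot]
    push_cast; ring
  have hH0 : (Nat.card H : ℂ) ≠ 0 := by
    exact_mod_cast (Nat.card_pos (α := H)).ne'
  have hn0 : (n : ℂ) ≠ 0 := by
    obtain ⟨i, -⟩ := hσ.surjective (QuotientGroup.mk 1)
    have hpos : 0 < n := Fin.pos_iff_nonempty.mpr ⟨i⟩
    exact_mod_cast hpos.ne'
  -- Step 1: (1+ρ)·Φ·ι(Φ) = |G| • ((1+ρ)·T)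
  set V : MonoidAlgebra ℂ (Gam G) := iota (Gam G) (∑ i ∈ S, cosetSum H (σ i) 1) with hV
  have step1 : (1 + rho G) * (Phi H σ S * iota (Gam G) (Phi H σ S))
      = (Fintype.card G : ℂ) • ((1 + rho G) * Tsum G) := by
    have hA : (1 + rho G) * Phi H σ S = (1 + rho G) * Tsum G := by
      rw [Phi, mul_add, ← mul_assoc, one_add_rho_mul_rho_sub_one, zero_mul, add_zero]
    have hB : iota (Gam G) (Phi H σ S) = Tsum G + V * (rho G - 1) := by
      rw [Phi, map_add, iota_T, iota_mul, iota_rho_sub_one, hV]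
    have h2 : (1 + rho G) * (Tsum G * (V * (rho G - 1))) = 0 := by
      rw [← mul_assoc (Tsum G), sub_comm_any (Tsum G * V), ← mul_assoc,
        one_add_rho_mul_rho_sub_one, zero_mul]
    rw [← mul_assoc, hA, mul_assoc, hB, mul_add, mul_add, h2, add_zero, T_mul_T,
      mul_smul_comm]
  -- Step 2: (1+ρ)·A = (1/2) • ((1+ρ)·T)
  have step2 : (1 + rho G) * Afun H σ S = (2 : ℂ)⁻¹ • ((1 + rho G) * Tsum G) := by
    rw [Afun, mul_smul_comm, step1, smul_smul, hcardG]
    congr 1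
    field_simp
  -- Step 3: each conjugate term
  have hterm : ∀ γ : Gam G, (1 + rho G) *
      (MonoidAlgebra.of ℂ (Gam G) γ * Afun H σ S * MonoidAlgebra.of ℂ (Gam G) γ⁻¹)
      = (2 : ℂ)⁻¹ • W := by
    intro γ
    rw [← mul_assoc, ← mul_assoc, one_add_rho_comm (MonoidAlgebra.of ℂ (Gam G) γ),
      mul_assoc (MonoidAlgebra.of ℂ (Gam G) γ), step2, mul_smul_comm, smul_mul_assoc,
      one_add_rho_mul_T, ← hW, conj_W]
  -- Step 4: the main identity
  have hΓ0 : (Fintype.card (Gam G) : ℂ) ≠ 0 := by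
    exact_mod_cast Fintype.card_ne_zero (α := Gam G)
  have main : A0 H σ S + rho G * A0 H σ S = (2 : ℂ)⁻¹ • W := by
    have : A0 H σ S + rho G * A0 H σ S = (1 + rho G) * A0 H σ S := by
      rw [add_mul, one_mul]
    rw [this, A0, mul_smul_comm, Finset.mul_sum]
    simp only [hterm]
    rw [Finset.sum_const, Finset.card_univ, ← Nat.cast_smul_eq_nsmul ℂ, smul_smul, smul_smul,
      inv_mul_cancel₀ hΓ0, one_mul]
  refine ⟨main, fun γ => ?_⟩
  have h1 : (A0 H σ S + rho G * A0 H σ S).coeff γ = ((2 : ℂ)⁻¹ • W).coeff γ := by rw [main]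
  rw [MonoidAlgebra.coeff_add, Finsupp.add_apply] at h1
  have h2 : (rho G * A0 H σ S).coeff γ = (A0 H σ S).coeff (rhoEl G * γ) := by
    rw [rho_def, MonoidAlgebra.coeff_single_mul_apply, rhoEl_inv, one_mul]
  have h3 : ((2 : ℂ)⁻¹ • W).coeff γ = 1 / 2 := by
    have hWγ : W.coeff γ = 1 := by
      rw [hW, MonoidAlgebra.coeff_sum, Finsupp.finset_sum_apply]
      simp only [MonoidAlgebra.of_apply, MonoidAlgebra.coeff_single, Finsupp.single_apply]
      rw [Finset.sum_ite_eq' Finset.univ γ (fun _ => (1 : ℂ)), if_pos (Finset.mem_univ γ)]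
    rw [MonoidAlgebra.coeff_smul_apply, hWγ, smul_eq_mul, mul_one, one_div]
  rw [h2, h3] at h1
  exact h1

end
end

section
/- (Core of Theorem 3.1) With notation as in the setup, suppose the action of G by left multiplication on the coset space G/H is 2-transitive, i.e., for any two ordered pairs of distinct cosets there is an element of G carrying the first pair to the second. Then for any two subsets S, S' ⊆ {1,…,n} with #S = #S' = 2, one has A^0_{Φ_S} = A^0_{Φ_{S'}} in ℂ[Γ]. (Combined with the Yang–Yin averaged Colmez theorem, this proves the Colmez conjecture for every CM type of the unitary CM field E = kF when G acts 2-transitively on G/H.) -/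
open MonoidAlgebra Finset

noncomputable section

lemma iota_of {Γ : Type*} [Group Γ] (γ : Γ) :
    iota Γ (MonoidAlgebra.of ℂ Γ γ) = MonoidAlgebra.of ℂ Γ γ⁻¹ := by
  simp only [iota, MonoidAlgebra.of_apply, Finsupp.lmapDomain_apply]
  exact MonoidAlgebra.mapDomainLinearMap_single _ _ _

lemma M2.conj (t s : Multiplicative (ZMod 2)) : t * s * t⁻¹ = s := by revert t s; decide

/-- Rewriting `Φ_S` as a plain sum of group elements of `Γ`. -/
lemma Phi_eq {G : Type*} [Group G] [Fintype G] (H : Subgroup G) [DecidablePred (· ∈ H)] {n : ℕ}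
    (σ : Fin n → G) (hσ : Function.Bijective fun i : Fin n => (QuotientGroup.mk (σ i) : G ⧸ H))
    (S : Finset (Fin n)) :
    Phi H σ S = ∑ g : G, MonoidAlgebra.of ℂ (Gam G)
      (g, if (QuotientGroup.mk g : G ⧸ H) ∈ S.image (fun i => (QuotientGroup.mk (σ i) : G ⧸ H))
          then Multiplicative.ofAdd (1 : ZMod 2) else 1) := by
  set e : Fin n ≃ G ⧸ H := Equiv.ofBijective _ hσ with he
  set C : Finset (G ⧸ H) := S.image (fun i => (QuotientGroup.mk (σ i) : G ⧸ H)) with hC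
  have hmemH : ∀ g : G, (σ (e.symm (QuotientGroup.mk g)))⁻¹ * g ∈ H := by
    intro g
    have : (QuotientGroup.mk (σ (e.symm (QuotientGroup.mk g))) : G ⧸ H) = QuotientGroup.mk g :=
      e.apply_symm_apply (QuotientGroup.mk g)
    exact QuotientGroup.eq.mp this
  have hmk2 : ∀ (i : Fin n) (x : H),
      (QuotientGroup.mk (σ i * (x : G)) : G ⧸ H) = QuotientGroup.mk (σ i) := by
    intro i x
    symm
    apply QuotientGroup.eq.mpr
    have : (σ i)⁻¹ * (σ i * (x : G)) = (x : G) := by group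
    rw [this]; exact x.2
  have key : ∑ i ∈ S, cosetSum H (σ i) 1
      = ∑ g ∈ univ.filter (fun g : G => (QuotientGroup.mk g : G ⧸ H) ∈ C), emb g := by
    simp only [cosetSum]
    rw [← Finset.sum_product' (s := S) (t := (univ : Finset H))
      (f := fun i x => emb (σ i * (x : G) * 1))]
    apply Finset.sum_nbij' (i := fun p : Fin n × H => σ p.1 * (p.2 : G))
      (j := fun g : G => (e.symm (QuotientGroup.mk g),
        ⟨(σ (e.symm (QuotientGroup.mk g)))⁻¹ * g, hmemH g⟩))
    · intro p hp
      simp only [Finset.mem_product, Finset.mem_univ, and_true] at hp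
      simp only [mem_filter, mem_univ, true_and, hC]
      refine Finset.mem_image.mpr ⟨p.1, hp, ?_⟩
      exact (hmk2 p.1 p.2).symm
    · intro g hg
      simp only [mem_filter, mem_univ, true_and, hC] at hg
      obtain ⟨i, hi, hmk⟩ := Finset.mem_image.mp hg
      simp only [Finset.mem_product, Finset.mem_univ, and_true]
      have : e.symm (QuotientGroup.mk g) = i := by
        rw [← hmk]; exact e.symm_apply_apply i
      rw [this]; exact hi
    · intro p hp
      have h1 : e.symm (QuotientGroup.mk (σ p.1 * (p.2 : G))) = p.1 := by
        rw [hmk2 p.1 p.2]; exact e.symm_apply_apply p.1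
      refine Prod.ext h1 (Subtype.ext ?_)
      simp only [h1]; group
    · intro g _
      simp only []; group
    · intro p _
      simp only [mul_one]
  have hrho : ∀ g : G, (rho G - 1) * emb g
      = MonoidAlgebra.of ℂ (Gam G) (g, Multiplicative.ofAdd (1 : ZMod 2))
        - MonoidAlgebra.of ℂ (Gam G) (g, 1) := by
    intro g
    have : rho G * emb g = MonoidAlgebra.of ℂ (Gam G) (g, Multiplicative.ofAdd (1 : ZMod 2)) := by
      rw [rho, emb, ← map_mul]
      congr 1
      simp [rhoEl, Prod.ext_iff]
    rw [sub_mul, one_mul, this, emb]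
  rw [Phi, key, Finset.sum_filter, Tsum, Finset.mul_sum, ← Finset.sum_add_distrib]
  apply Finset.sum_congr rfl
  intro g _
  by_cases hg : (QuotientGroup.mk g : G ⧸ H) ∈ C
  · rw [if_pos hg, if_pos hg, hrho g, emb]
    abel
  · rw [if_neg hg, if_neg hg, mul_zero, add_zero, emb]

/-- Expansion of the conjugation-averaged product, for an arbitrary sign function `χ`. -/
lemma conjsum_eq {G : Type*} [Group G] [Fintype G] (χ : G → Multiplicative (ZMod 2)) :
    ∑ γ : Gam G, MonoidAlgebra.of ℂ (Gam G) γ *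
        ((∑ g : G, MonoidAlgebra.of ℂ (Gam G) (g, χ g)) *
          iota (Gam G) (∑ g : G, MonoidAlgebra.of ℂ (Gam G) (g, χ g))) *
        MonoidAlgebra.of ℂ (Gam G) γ⁻¹
  = ∑ a : G, ∑ b : G, ∑ γ : Gam G,
      MonoidAlgebra.of ℂ (Gam G) (a * b⁻¹, χ (γ.1⁻¹ * a) * (χ (γ.1⁻¹ * b))⁻¹) := by
  rw [map_sum]
  simp only [iota_of]
  have step1 : ∀ γ : Gam G, MonoidAlgebra.of ℂ (Gam G) γ *
      ((∑ g : G, MonoidAlgebra.of ℂ (Gam G) (g, χ g)) *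
        (∑ g : G, MonoidAlgebra.of ℂ (Gam G) ((g, χ g) : Gam G)⁻¹)) *
      MonoidAlgebra.of ℂ (Gam G) γ⁻¹
    = ∑ a : G, ∑ b : G,
        MonoidAlgebra.of ℂ (Gam G) (a * b⁻¹, χ (γ.1⁻¹ * a) * (χ (γ.1⁻¹ * b))⁻¹) := by
    intro γ
    rw [Finset.sum_mul_sum]
    simp only [Finset.mul_sum, Finset.sum_mul]
    refine Fintype.sum_equiv (Equiv.mulLeft γ.1) _ _ fun g => ?_
    refine Fintype.sum_equiv (Equiv.mulLeft γ.1) _ _ fun h => ?_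
    rw [← map_mul, ← map_mul, ← map_mul]
    congr 1
    simp only [Equiv.coe_mulLeft]
    obtain ⟨k, t⟩ := γ
    refine Prod.ext ?_ ?_
    · simp only [Prod.fst_mul, Prod.fst_inv]
      group
    · simp only [Prod.snd_mul, Prod.snd_inv]
      rw [inv_mul_cancel_left, inv_mul_cancel_left]
      exact M2.conj t _
  rw [Finset.sum_congr rfl fun γ _ => step1 γ, Finset.sum_comm]
  refine Finset.sum_congr rfl fun a _ => Finset.sum_comm

/-- a permutation of `α` carrying `s` to `t`, given equal cards -/
lemma exists_equiv_iff_mem {α : Type*} [Fintype α] [DecidableEq α] {s t : Finset α}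
    (h : s.card = t.card) : ∃ e : Equiv.Perm α, ∀ x, e x ∈ t ↔ x ∈ s := by
  classical
  have h1 : Fintype.card {x // x ∈ s} = Fintype.card {x // x ∈ t} := by
    simpa [Fintype.card_coe] using h
  have h2 : Fintype.card {x // ¬ x ∈ s} = Fintype.card {x // ¬ x ∈ t} := by
    rw [Fintype.card_subtype_compl, Fintype.card_subtype_compl, h1]
  refine ⟨Equiv.subtypeCongr (Fintype.equivOfCardEq h1) (Fintype.equivOfCardEq h2), fun x => ?_⟩
  by_cases hx : x ∈ s
  · simp only [Equiv.subtypeCongr, Equiv.trans_apply, Equiv.sumCompl_symm_apply_of_pos hx,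
      Equiv.sumCongr_apply, Sum.map_inl, Equiv.sumCompl_apply_inl]
    exact iff_of_true (Fintype.equivOfCardEq h1 ⟨x, hx⟩).2 hx
  · simp only [Equiv.subtypeCongr, Equiv.trans_apply, Equiv.sumCompl_symm_apply_of_neg hx,
      Equiv.sumCongr_apply, Sum.map_inr, Equiv.sumCompl_apply_inr]
    exact iff_of_false (Fintype.equivOfCardEq h2 ⟨x, hx⟩).2 hx

/-- The key counting lemma, from 2-transitivity. -/
lemma count_xor_eq {G : Type*} [Group G] [Fintype G] (H : Subgroup G) [DecidablePred (· ∈ H)]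
    (h2t : ∀ a b c d : G ⧸ H, a ≠ b → c ≠ d → ∃ g : G, g • a = c ∧ g • b = d)
    (C C' : Finset (G ⧸ H)) (hcard : C.card = C'.card) (a b : G) :
    (univ.filter fun k : G =>
      ¬((QuotientGroup.mk (k⁻¹ * a) : G ⧸ H) ∈ C ↔ (QuotientGroup.mk (k⁻¹ * b) : G ⧸ H) ∈ C)).card
  = (univ.filter fun k : G =>
      ¬((QuotientGroup.mk (k⁻¹ * a) : G ⧸ H) ∈ C' ↔ (QuotientGroup.mk (k⁻¹ * b) : G ⧸ H) ∈ C')).card := by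
  have hq : ∀ k : G, ((QuotientGroup.mk (k⁻¹ * a) : G ⧸ H) = QuotientGroup.mk (k⁻¹ * b))
      ↔ ((QuotientGroup.mk a : G ⧸ H) = QuotientGroup.mk b) := by
    intro k
    rw [QuotientGroup.eq, QuotientGroup.eq]
    constructor <;> intro h <;>
    · convert h using 1; group
  by_cases hab : (QuotientGroup.mk a : G ⧸ H) = QuotientGroup.mk b
  · have : ∀ (D : Finset (G ⧸ H)), (univ.filter fun k : G =>
        ¬((QuotientGroup.mk (k⁻¹ * a) : G ⧸ H) ∈ D ↔ (QuotientGroup.mk (k⁻¹ * b) : G ⧸ H) ∈ D)) = ∅ := by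
      intro D
      refine Finset.filter_eq_empty_iff.mpr fun k _ => ?_
      rw [(hq k).mpr hab]
      tauto
    rw [this C, this C']
  · -- main case
    set θ : G → (G ⧸ H) × (G ⧸ H) := fun k => (QuotientGroup.mk (k⁻¹ * a), QuotientGroup.mk (k⁻¹ * b)) with hθ
    have hdist : ∀ k, (θ k).1 ≠ (θ k).2 := fun k h => hab ((hq k).mp h)
    have hfib : ∀ p q : (G ⧸ H) × (G ⧸ H), p.1 ≠ p.2 → q.1 ≠ q.2 →
        (univ.filter fun k => θ k = p).card = (univ.filter fun k => θ k = q).card := by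
      intro p q hp hqd
      obtain ⟨g, hg1, hg2⟩ := h2t p.1 p.2 q.1 q.2 hp hqd
      have key : ∀ (k g' : G) (r : (G ⧸ H) × (G ⧸ H)), θ k = r → θ (k * g'⁻¹) = (g' • r.1, g' • r.2) := by
        intro k g' r hk
        have e1 : (k * g'⁻¹)⁻¹ * a = g' * (k⁻¹ * a) := by group
        have e2 : (k * g'⁻¹)⁻¹ * b = g' * (k⁻¹ * b) := by group
        have : θ (k * g'⁻¹) = (g' • (θ k).1, g' • (θ k).2) := by
          simp only [hθ, e1, e2]; rfl
        rw [this, hk]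
      apply Finset.card_nbij' (fun k => k * g⁻¹) (fun k => k * g)
      · intro k hk
        simp only [Finset.mem_coe, mem_filter, mem_univ, true_and] at hk ⊢
        rw [key k g p hk, hg1, hg2]
      · intro k hk
        simp only [Finset.mem_coe, mem_filter, mem_univ, true_and] at hk ⊢
        have hh := key k g⁻¹ q hk
        rw [inv_inv] at hh
        rw [hh]
        have e1 : g⁻¹ • q.1 = p.1 := by rw [← hg1, inv_smul_smul]
        have e2 : g⁻¹ • q.2 = p.2 := by rw [← hg2, inv_smul_smul]
        rw [e1, e2]
      · intro k _; group
      · intro k _; group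
    have main : ∀ (D : Finset (G ⧸ H)), (univ.filter fun k : G =>
        ¬((QuotientGroup.mk (k⁻¹ * a) : G ⧸ H) ∈ D ↔ (QuotientGroup.mk (k⁻¹ * b) : G ⧸ H) ∈ D)).card
        = (univ.filter fun p : (G ⧸ H) × (G ⧸ H) => p.1 ≠ p.2 ∧ ¬(p.1 ∈ D ↔ p.2 ∈ D)).card
          * (univ.filter fun k => θ k = ((QuotientGroup.mk a : G ⧸ H), QuotientGroup.mk b)).card := by
      intro D
      have hcov : ∀ k ∈ (univ.filter fun k : G =>
          ¬((QuotientGroup.mk (k⁻¹ * a) : G ⧸ H) ∈ D ↔ (QuotientGroup.mk (k⁻¹ * b) : G ⧸ H) ∈ D)),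
          θ k ∈ (univ.filter fun p : (G ⧸ H) × (G ⧸ H) => p.1 ≠ p.2 ∧ ¬(p.1 ∈ D ↔ p.2 ∈ D)) := by
        intro k hk
        simp only [mem_filter, mem_univ, true_and] at hk ⊢
        exact ⟨hdist k, hk⟩
      rw [Finset.card_eq_sum_card_fiberwise hcov]
      have hterm : ∀ p ∈ (univ.filter fun p : (G ⧸ H) × (G ⧸ H) => p.1 ≠ p.2 ∧ ¬(p.1 ∈ D ↔ p.2 ∈ D)),
          ((univ.filter fun k : G =>
            ¬((QuotientGroup.mk (k⁻¹ * a) : G ⧸ H) ∈ D ↔ (QuotientGroup.mk (k⁻¹ * b) : G ⧸ H) ∈ D)).filter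
            fun k => θ k = p).card
          = (univ.filter fun k => θ k = ((QuotientGroup.mk a : G ⧸ H), QuotientGroup.mk b)).card := by
        intro p hp
        simp only [mem_filter, mem_univ, true_and] at hp
        have hflt : ((univ.filter fun k : G =>
            ¬((QuotientGroup.mk (k⁻¹ * a) : G ⧸ H) ∈ D ↔ (QuotientGroup.mk (k⁻¹ * b) : G ⧸ H) ∈ D)).filter
            fun k => θ k = p) = univ.filter fun k => θ k = p := by
          rw [Finset.filter_filter]
          apply Finset.filter_congr
          intro k _
          constructor
          · exact fun h => h.2
          · intro h
            refine ⟨?_, h⟩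
            have h1 : (QuotientGroup.mk (k⁻¹ * a) : G ⧸ H) = p.1 := by rw [← h]
            have h2 : (QuotientGroup.mk (k⁻¹ * b) : G ⧸ H) = p.2 := by rw [← h]
            rw [h1, h2]; exact hp.2
        rw [hflt]
        exact hfib p _ hp.1 hab
      rw [Finset.sum_congr rfl hterm, Finset.sum_const, smul_eq_mul]
    rw [main C, main C']
    congr 1
    obtain ⟨e, he⟩ := exists_equiv_iff_mem hcard
    apply Finset.card_nbij' (fun p => (e p.1, e p.2)) (fun p => (e.symm p.1, e.symm p.2))
    · intro p hp
      simp only [Finset.mem_coe, mem_filter, mem_univ, true_and] at hp ⊢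
      refine ⟨fun h => hp.1 (e.injective h), ?_⟩
      rw [he p.1, he p.2]; exact hp.2
    · intro p hp
      simp only [Finset.mem_coe, mem_filter, mem_univ, true_and] at hp ⊢
      refine ⟨fun h => hp.1 (e.symm.injective h), ?_⟩
      rw [← he (e.symm p.1), ← he (e.symm p.2), e.apply_symm_apply, e.apply_symm_apply]
      exact hp.2
    · intro p _; simp
    · intro p _; simp

lemma M2.dichotomy (x : Multiplicative (ZMod 2)) :
    x = Multiplicative.ofAdd (1 : ZMod 2) ∨ x = 1 := by revert x; decide


set_option maxHeartbeats 1000000 in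
/-- core of Theorem 3.1: if `G` acts 2-transitively on `G/H`, then all
`A⁰_{Φ_S}` with `#S = 2` coincide. -/
theorem A0_card_two_eq_of_two_transitive {G : Type*} [Group G] [Fintype G] (H : Subgroup G)
    [DecidablePred (· ∈ H)] {n : ℕ} (hn : 2 ≤ n) (σ : Fin n → G)
    (hσ : Function.Bijective fun i : Fin n => (QuotientGroup.mk (σ i) : G ⧸ H))
    (h2t : ∀ a b c d : G ⧸ H, a ≠ b → c ≠ d → ∃ g : G, g • a = c ∧ g • b = d)
    (S S' : Finset (Fin n)) (hS : S.card = 2) (hS' : S'.card = 2) :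
    A0 H σ S = A0 H σ S' := by

  classical
  set C : Finset (G ⧸ H) := S.image (fun i => (QuotientGroup.mk (σ i) : G ⧸ H)) with hC
  set C' : Finset (G ⧸ H) := S'.image (fun i => (QuotientGroup.mk (σ i) : G ⧸ H)) with hC'
  have hcard : C.card = C'.card := by
    rw [hC, hC', Finset.card_image_of_injective _ hσ.injective,
      Finset.card_image_of_injective _ hσ.injective, hS, hS']
  set χ1 : G → Multiplicative (ZMod 2) := fun g =>
    if (QuotientGroup.mk g : G ⧸ H) ∈ C then Multiplicative.ofAdd (1 : ZMod 2) else 1 with hχ1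
  set χ2 : G → Multiplicative (ZMod 2) := fun g =>
    if (QuotientGroup.mk g : G ⧸ H) ∈ C' then Multiplicative.ofAdd (1 : ZMod 2) else 1 with hχ2
  have hsum : ∀ a b : G,
      ∑ γ : Gam G, MonoidAlgebra.of ℂ (Gam G) (a * b⁻¹, χ1 (γ.1⁻¹ * a) * (χ1 (γ.1⁻¹ * b))⁻¹)
    = ∑ γ : Gam G, MonoidAlgebra.of ℂ (Gam G) (a * b⁻¹, χ2 (γ.1⁻¹ * a) * (χ2 (γ.1⁻¹ * b))⁻¹) := by
    intro a b
    have hiff : ∀ (D : Finset (G ⧸ H)) (k : G),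
        (((if (QuotientGroup.mk (k⁻¹ * a) : G ⧸ H) ∈ D then Multiplicative.ofAdd (1 : ZMod 2) else 1)
          * (if (QuotientGroup.mk (k⁻¹ * b) : G ⧸ H) ∈ D then Multiplicative.ofAdd (1 : ZMod 2) else 1)⁻¹)
          = Multiplicative.ofAdd (1 : ZMod 2))
        ↔ ¬((QuotientGroup.mk (k⁻¹ * a) : G ⧸ H) ∈ D ↔ (QuotientGroup.mk (k⁻¹ * b) : G ⧸ H) ∈ D) := by
      intro D k
      by_cases h1 : (QuotientGroup.mk (k⁻¹ * a) : G ⧸ H) ∈ D <;>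
        by_cases h2 : (QuotientGroup.mk (k⁻¹ * b) : G ⧸ H) ∈ D <;>
        simp only [h1, h2, if_true, if_false, iff_true, iff_false, not_true, not_false_iff] <;>
        simp <;> decide
    have hcount : (univ.filter fun k : G =>
          ¬((QuotientGroup.mk (k⁻¹ * a) : G ⧸ H) ∈ C ↔ (QuotientGroup.mk (k⁻¹ * b) : G ⧸ H) ∈ C)).card
        = (univ.filter fun k : G =>
          ¬((QuotientGroup.mk (k⁻¹ * a) : G ⧸ H) ∈ C' ↔ (QuotientGroup.mk (k⁻¹ * b) : G ⧸ H) ∈ C')).card :=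
      count_xor_eq H h2t C C' hcard a b
    obtain ⟨e, he⟩ := exists_equiv_iff_mem hcount
    have he' : ∀ k : G, χ2 ((e k)⁻¹ * a) * (χ2 ((e k)⁻¹ * b))⁻¹
        = χ1 (k⁻¹ * a) * (χ1 (k⁻¹ * b))⁻¹ := by
      intro k
      have hmem : (¬((QuotientGroup.mk ((e k)⁻¹ * a) : G ⧸ H) ∈ C' ↔ (QuotientGroup.mk ((e k)⁻¹ * b) : G ⧸ H) ∈ C'))
          ↔ (¬((QuotientGroup.mk (k⁻¹ * a) : G ⧸ H) ∈ C ↔ (QuotientGroup.mk (k⁻¹ * b) : G ⧸ H) ∈ C)) := by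
        have := he k
        simpa only [mem_filter, mem_univ, true_and] using this
      have hiff2 : (χ2 ((e k)⁻¹ * a) * (χ2 ((e k)⁻¹ * b))⁻¹ = Multiplicative.ofAdd (1 : ZMod 2))
          ↔ (χ1 (k⁻¹ * a) * (χ1 (k⁻¹ * b))⁻¹ = Multiplicative.ofAdd (1 : ZMod 2)) :=
        (hiff C' (e k)).trans (hmem.trans (hiff C k).symm)
      rcases M2.dichotomy (χ1 (k⁻¹ * a) * (χ1 (k⁻¹ * b))⁻¹) with h | h
      · rw [h]; exact hiff2.mpr h
      · rw [h]
        rcases M2.dichotomy (χ2 ((e k)⁻¹ * a) * (χ2 ((e k)⁻¹ * b))⁻¹) with h2 | h2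
        · exfalso
          have := hiff2.mp h2
          rw [h] at this
          exact (by decide : ¬((1 : Multiplicative (ZMod 2)) = Multiplicative.ofAdd (1 : ZMod 2))) this
        · exact h2
    refine Fintype.sum_equiv (Equiv.prodCongr e (Equiv.refl (Multiplicative (ZMod 2)))) _ _ fun γ => ?_
    have : ((Equiv.prodCongr e (Equiv.refl (Multiplicative (ZMod 2)))) γ).1 = e γ.1 := rfl
    rw [this, he' γ.1]
  have key : ∑ γ : Gam G, MonoidAlgebra.of ℂ (Gam G) γ *
        (Phi H σ S * iota (Gam G) (Phi H σ S)) * MonoidAlgebra.of ℂ (Gam G) γ⁻¹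
      = ∑ γ : Gam G, MonoidAlgebra.of ℂ (Gam G) γ *
        (Phi H σ S' * iota (Gam G) (Phi H σ S')) * MonoidAlgebra.of ℂ (Gam G) γ⁻¹ := by
    rw [Phi_eq H σ hσ S, Phi_eq H σ hσ S']
    rw [show (∑ g : G, MonoidAlgebra.of ℂ (Gam G)
        (g, if (QuotientGroup.mk g : G ⧸ H) ∈ C then Multiplicative.ofAdd (1 : ZMod 2) else 1))
      = ∑ g : G, MonoidAlgebra.of ℂ (Gam G) (g, χ1 g) from rfl]
    rw [show (∑ g : G, MonoidAlgebra.of ℂ (Gam G)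
        (g, if (QuotientGroup.mk g : G ⧸ H) ∈ C' then Multiplicative.ofAdd (1 : ZMod 2) else 1))
      = ∑ g : G, MonoidAlgebra.of ℂ (Gam G) (g, χ2 g) from rfl]
    rw [conjsum_eq χ1, conjsum_eq χ2]
    exact Finset.sum_congr rfl fun a _ => Finset.sum_congr rfl fun b _ => hsum a b
  rw [A0, A0, Afun, Afun]
  simp only [mul_smul_comm, smul_mul_assoc]
  rw [← Finset.smul_sum, ← Finset.smul_sum, key]

end
end
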